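/- Let f : B^n → ℝ be (d+1)-times continuously differentiable with max |f| = 1 on B^n, and suppose f vanishes on a set Z ⊂ B^n with non-empty interior. Then the sup norm of the (d+1)-st derivative of f on B^n is at least (d+1)!/2^{d+1}. -/

import Mathlib

open Metric

/-- The pointwise norm of the `k`-th derivative of `f` within the closed unit ball, taken
as the sum of absolute values of all order-`k` partial derivatives (indexed by functions
`c : Fin k → Fin n` choosing a coordinate direction for each differentiation). -/
noncomputable def partialsNorm (n k : ℕ) (f : EuclideanSpace ℝ (Fin n) → ℝ)
    (x : EuclideanSpace ℝ (Fin n)) : ℝ :=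
  ∑ c : Fin k → Fin n,
    |iteratedFDerivWithin ℝ k f (closedBall (0 : EuclideanSpace ℝ (Fin n)) 1) x
      (fun i => EuclideanSpace.single (c i) 1)|

section aux

variable {n : ℕ}

/-- coordinate bound in Euclidean space -/
lemma abs_coord_le_norm (v : EuclideanSpace ℝ (Fin n)) (j : Fin n) : |v j| ≤ ‖v‖ := by
  rw [EuclideanSpace.norm_eq]
  have h1 : |v j| = Real.sqrt (‖v j‖ ^ 2) := by
    rw [Real.sqrt_sq_eq_abs]; simp [abs_abs]
  rw [h1]
  apply Real.sqrt_le_sqrt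
  exact Finset.single_le_sum (f := fun i => ‖v i‖ ^ 2)
    (fun i _ => by positivity) (Finset.mem_univ j)

end aux

/-- If `f` is `C^{d+1}` on the closed unit ball `Bⁿ` with `max_{Bⁿ} |f| = 1`, and `f`
vanishes on a set `Z ⊆ Bⁿ` with non-empty interior, then the sup over `Bⁿ` of the norm of
the `(d+1)`-st derivative of `f` is at least `(d+1)!/2^(d+1)`. -/
theorem rigidity_of_nonempty_interior
    (n d : ℕ) (f : EuclideanSpace ℝ (Fin n) → ℝ)
    (hf : ContDiffOn ℝ (d + 1) f (closedBall (0 : EuclideanSpace ℝ (Fin n)) 1))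
    (hbound : ∀ x ∈ closedBall (0 : EuclideanSpace ℝ (Fin n)) 1, |f x| ≤ 1)
    (hattain : ∃ x ∈ closedBall (0 : EuclideanSpace ℝ (Fin n)) 1, |f x| = 1)
    (Z : Set (EuclideanSpace ℝ (Fin n)))
    (hZ : Z ⊆ closedBall (0 : EuclideanSpace ℝ (Fin n)) 1)
    (hZint : (interior Z).Nonempty)
    (hZzero : ∀ z ∈ Z, f z = 0) :
    ∀ A : ℝ,
      (∀ x ∈ closedBall (0 : EuclideanSpace ℝ (Fin n)) 1,
        partialsNorm n (d + 1) f x ≤ A) →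
      (Nat.factorial (d + 1) : ℝ) / 2 ^ (d + 1) ≤ A := by
  intro A hA
  classical
  set B : Set (EuclideanSpace ℝ (Fin n)) := closedBall (0 : EuclideanSpace ℝ (Fin n)) 1 with hB
  obtain ⟨x, hxB, hx1⟩ := hattain
  obtain ⟨z, hz⟩ := hZint
  have hzZ : z ∈ Z := interior_subset hz
  have hzB : z ∈ B := hZ hzZ
  obtain ⟨ε, hεpos, hball⟩ := Metric.isOpen_iff.1 isOpen_interior z hz
  set v : EuclideanSpace ℝ (Fin n) := x - z with hv
  set L : ℝ → EuclideanSpace ℝ (Fin n) := fun t => z + t • v with hL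
  have hnx : ‖x‖ ≤ 1 := mem_closedBall_zero_iff.1
    (show x ∈ closedBall (0 : EuclideanSpace ℝ (Fin n)) 1 from hxB)
  have hnz : ‖z‖ ≤ 1 := mem_closedBall_zero_iff.1
    (show z ∈ closedBall (0 : EuclideanSpace ℝ (Fin n)) 1 from hzB)
  have hnv : ‖v‖ ≤ 2 := by
    calc ‖v‖ ≤ ‖x‖ + ‖z‖ := norm_sub_le _ _
    _ ≤ 2 := by linarith
  have hmaps : Set.MapsTo L (Set.Icc (0:ℝ) 1) B := by
    intro t ht
    have hco : L t = (1 - t) • z + t • x := by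
      simp only [hL, hv]
      module
    rw [hco]
    exact convex_closedBall (0:EuclideanSpace ℝ (Fin n)) 1 hzB hxB (by linarith [ht.2]) ht.1 (by ring)
  have hUD : UniqueDiffOn ℝ B :=
    uniqueDiffOn_convex (convex_closedBall _ _)
      (by simp [hB, interior_closedBall (0:EuclideanSpace ℝ (Fin n)) one_ne_zero,
        Metric.nonempty_ball.2 one_pos])
  have hUDI : UniqueDiffOn ℝ (Set.Icc (0:ℝ) 1) := uniqueDiffOn_Icc one_pos
  have hLder : ∀ t : ℝ, HasDerivWithinAt L v (Set.Icc (0:ℝ) 1) t := by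
    intro t
    have h1 : HasDerivAt (fun s : ℝ => s • v) ((1:ℝ) • v) t :=
      (hasDerivAt_id t).smul_const v
    have : HasDerivAt L v t := by
      simpa [hL, one_smul] using (h1.const_add z)
    exact this.hasDerivWithinAt
  set φ : ℕ → ℝ → ℝ :=
    fun k t => (iteratedFDerivWithin ℝ k f B (L t)) (fun _ : Fin k => v) with hφ
  have key : ∀ k : ℕ, k ≤ d → ∀ t ∈ Set.Icc (0:ℝ) 1,
      HasDerivWithinAt (φ k) (φ (k+1) t) (Set.Icc (0:ℝ) 1) t := by
    intro k hk t ht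
    have hkd : (k : WithTop ℕ∞) < (d : WithTop ℕ∞) + 1 := by
      exact_mod_cast Nat.lt_succ_of_le hk
    have hdiff : DifferentiableWithinAt ℝ (iteratedFDerivWithin ℝ k f B) B (L t) :=
      (hf.differentiableOn_iteratedFDerivWithin hkd hUD) (L t) (hmaps ht)
    have h1 : HasDerivWithinAt (fun s => iteratedFDerivWithin ℝ k f B (L s))
        (fderivWithin ℝ (iteratedFDerivWithin ℝ k f B) B (L t) v) (Set.Icc (0:ℝ) 1) t :=
      hdiff.hasFDerivWithinAt.comp_hasDerivWithinAt t (hLder t) hmaps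
    have h2 := (ContinuousMultilinearMap.apply ℝ (fun _ : Fin k => EuclideanSpace ℝ (Fin n)) ℝ
      (fun _ => v)).hasFDerivAt.comp_hasDerivWithinAt t h1
    have h3 : φ (k+1) t =
        (fderivWithin ℝ (iteratedFDerivWithin ℝ k f B) B (L t) v) (fun _ : Fin k => v) := by
      simp only [hφ]
      exact iteratedFDerivWithin_succ_apply_left (fun _ : Fin (k+1) => v)
    rw [h3]
    exact h2
  set g : ℝ → ℝ := f ∘ L with hg
  have hLcd : ContDiff ℝ ((d : ℕ∞)+1) L :=
    contDiff_const.add (contDiff_id.smul contDiff_const)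
  have hgc : ContDiffOn ℝ ((d : ℕ∞)+1) g (Set.Icc (0:ℝ) 1) :=
    hf.comp (hLcd.contDiffOn) hmaps
  have hEq : ∀ k : ℕ, k ≤ d + 1 → ∀ t ∈ Set.Icc (0:ℝ) 1,
      iteratedDerivWithin k g (Set.Icc (0:ℝ) 1) t = φ k t := by
    intro k
    induction k with
    | zero =>
      intro _ t ht
      simp [hφ, hg, iteratedDerivWithin_zero, iteratedFDerivWithin_zero_apply]
    | succ k ih =>
      intro hk t ht
      have hk' : k ≤ d := Nat.lt_succ_iff.mp hk
      rw [iteratedDerivWithin_succ]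
      have hcong : Set.EqOn (iteratedDerivWithin k g (Set.Icc (0:ℝ) 1)) (φ k)
          (Set.Icc (0:ℝ) 1) := fun s hs => ih (by omega) s hs
      rw [derivWithin_congr hcong (ih (by omega) t ht)]
      exact (key k hk' t ht).derivWithin (hUDI t ht)
  -- vanishing of all derivatives of g at 0
  obtain ⟨δ, hδpos, hδ1, hδsub⟩ : ∃ δ : ℝ, 0 < δ ∧ δ ≤ 1 ∧ ∀ t ∈ Set.Icc (0:ℝ) δ, L t ∈ Z := by
    refine ⟨min (ε/4) 1, by positivity, min_le_right _ _, ?_⟩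
    intro t ht
    have ht0 : 0 ≤ t := ht.1
    have htε : t ≤ ε/4 := le_trans ht.2 (min_le_left _ _)
    have : dist (L t) z < ε := by
      have : L t - z = t • v := by simp [hL]
      rw [dist_eq_norm, this, norm_smul]
      have : ‖t‖ * ‖v‖ ≤ (ε/4) * 2 := by
        apply mul_le_mul (by rwa [Real.norm_eq_abs, abs_of_nonneg ht0]) hnv (norm_nonneg _)
        linarith
      linarith
    exact interior_subset (hball this)
  have hgz : ∀ᶠ s in nhdsWithin 0 (Set.Icc (0:ℝ) 1), g s = 0 := by
    have hIio : Set.Iio δ ∈ nhds (0:ℝ) := Iio_mem_nhds hδpos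
    filter_upwards [mem_nhdsWithin_of_mem_nhds hIio, self_mem_nhdsWithin] with s hs1 hs2
    exact hZzero _ (hδsub s ⟨hs2.1, le_of_lt hs1⟩)
  have hvan : ∀ k : ℕ, iteratedDerivWithin k g (Set.Icc (0:ℝ) 1) 0 = 0 := by
    intro k
    have h0 : g 0 = 0 := by
      have : L 0 = z := by simp [hL]
      simp [hg, this, hZzero z hzZ]
    rw [iteratedDerivWithin_eq_iteratedFDerivWithin]
    have heq : iteratedFDerivWithin ℝ k g (Set.Icc (0:ℝ) 1) 0
        = iteratedFDerivWithin ℝ k (fun _ : ℝ => (0:ℝ)) (Set.Icc (0:ℝ) 1) 0 :=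
      Filter.EventuallyEq.iteratedFDerivWithin_eq hgz h0 k
    rw [heq, iteratedFDerivWithin_zero_fun]
    simp
  -- Taylor's theorem
  have hgc' : ContDiffOn ℝ (d : ℕ) g (Set.Icc (0:ℝ) 1) :=
    hgc.of_le le_self_add
  have hgd : DifferentiableOn ℝ (iteratedDerivWithin d g (Set.Icc (0:ℝ) 1))
      (Set.Ioo (0:ℝ) 1) := by
    intro t ht
    have htI : t ∈ Set.Icc (0:ℝ) 1 := Set.Ioo_subset_Icc_self ht
    have h1 : DifferentiableWithinAt ℝ (φ d) (Set.Icc (0:ℝ) 1) t :=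
      (key d le_rfl t htI).differentiableWithinAt
    have h2 : DifferentiableWithinAt ℝ (φ d) (Set.Ioo (0:ℝ) 1) t :=
      h1.mono Set.Ioo_subset_Icc_self
    exact h2.congr (fun s hs => hEq d (Nat.le_succ d) s (Set.Ioo_subset_Icc_self hs))
      (hEq d (Nat.le_succ d) t htI)
  obtain ⟨x', hx'I, hTay⟩ := taylor_mean_remainder_lagrange (f := g) (x₀ := 0) (x := 1)
    one_pos.ne (by rw [Set.uIcc_of_le (zero_le_one : (0:ℝ) ≤ 1)]; exact hgc')
    (by rw [Set.uIcc_of_le (zero_le_one : (0:ℝ) ≤ 1), Set.uIoo_of_le (zero_le_one : (0:ℝ) ≤ 1)]; exact hgd)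
  rw [Set.uIcc_of_le (zero_le_one : (0:ℝ) ≤ 1)] at hTay
  rw [Set.uIoo_of_le (zero_le_one : (0:ℝ) ≤ 1)] at hx'I
  have hTay0 : taylorWithinEval g d (Set.Icc (0:ℝ) 1) 0 1 = 0 := by
    rw [taylor_within_apply]
    apply Finset.sum_eq_zero
    intro k _
    rw [hvan k, smul_zero]
  have hg1 : g 1 = f x := by
    have : L 1 = x := by simp [hL, hv]
    simp [hg, this]
  have hx'I' : x' ∈ Set.Icc (0:ℝ) 1 := Set.Ioo_subset_Icc_self hx'I
  -- the multilinear bound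
  have hmb : |φ (d+1) x'| ≤ 2 ^ (d+1) * A := by
    set y : EuclideanSpace ℝ (Fin n) := L x' with hy
    have hyB : y ∈ B := hmaps hx'I'
    set T := iteratedFDerivWithin ℝ (d+1) f B y with hT
    have hvsum : (fun _ : Fin (d+1) => v)
        = fun _ : Fin (d+1) => ∑ j : Fin n, (v j) • EuclideanSpace.single j (1:ℝ) := by
      funext i
      ext j
      rw [show ((∑ x : Fin n, v x • EuclideanSpace.single x (1:ℝ)) j)
        = ∑ x : Fin n, (v x • EuclideanSpace.single x (1:ℝ)) j by rw [WithLp.ofLp_sum, Finset.sum_apply]]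
      simp [EuclideanSpace.single_apply]
    have hexp : T (fun _ : Fin (d+1) => v)
        = ∑ r : Fin (d+1) → Fin n,
            (∏ i : Fin (d+1), v (r i)) • T (fun i => EuclideanSpace.single (r i) (1:ℝ)) := by
      rw [hvsum]
      rw [show (T fun _ : Fin (d+1) => ∑ j : Fin n, (v j) • EuclideanSpace.single j (1:ℝ))
          = T.toMultilinearMap (fun _ : Fin (d+1) =>
            ∑ j : Fin n, (v j) • EuclideanSpace.single j (1:ℝ)) from rfl]
      rw [MultilinearMap.map_sum]
      congr 1
      funext r
      exact T.toMultilinearMap.map_smul_univ (fun i => v (r i))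
        (fun i => EuclideanSpace.single (r i) (1:ℝ))
    have : |T (fun _ : Fin (d+1) => v)| ≤ 2 ^ (d+1) * partialsNorm n (d+1) f y := by
      rw [hexp]
      calc |∑ r : Fin (d+1) → Fin n,
            (∏ i : Fin (d+1), v (r i)) • T (fun i => EuclideanSpace.single (r i) (1:ℝ))|
          ≤ ∑ r : Fin (d+1) → Fin n,
            |(∏ i : Fin (d+1), v (r i)) • T (fun i => EuclideanSpace.single (r i) (1:ℝ))| :=
            Finset.abs_sum_le_sum_abs _ _
        _ ≤ ∑ r : Fin (d+1) → Fin n,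
            2 ^ (d+1) * |T (fun i => EuclideanSpace.single (r i) (1:ℝ))| := by
            apply Finset.sum_le_sum
            intro r _
            rw [smul_eq_mul, abs_mul]
            apply mul_le_mul_of_nonneg_right _ (abs_nonneg _)
            calc |∏ i : Fin (d+1), v (r i)| = ∏ i : Fin (d+1), |v (r i)| := by
                  rw [Finset.abs_prod]
              _ ≤ ∏ _i : Fin (d+1), (2:ℝ) := by
                  apply Finset.prod_le_prod (fun i _ => abs_nonneg _)
                  intro i _
                  exact le_trans (abs_coord_le_norm v (r i)) hnv
              _ = 2 ^ (d+1) := by simp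
        _ = 2 ^ (d+1) * partialsNorm n (d+1) f y := by
            rw [partialsNorm, Finset.mul_sum]
    calc |φ (d+1) x'| = |T (fun _ : Fin (d+1) => v)| := by rw [hφ]
      _ ≤ 2 ^ (d+1) * partialsNorm n (d+1) f y := this
      _ ≤ 2 ^ (d+1) * A := by
          apply mul_le_mul_of_nonneg_left (hA y hyB) (by positivity)
  -- finish
  have hEq' : iteratedDerivWithin (d+1) g (Set.Icc (0:ℝ) 1) x' = φ (d+1) x' :=
    hEq (d+1) le_rfl x' hx'I'
  rw [hTay0, sub_zero, hEq'] at hTay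
  have hfact : (0:ℝ) < (Nat.factorial (d+1) : ℝ) := by
    exact_mod_cast Nat.factorial_pos (d+1)
  have h1 : (1:ℝ) = |φ (d+1) x'| / (Nat.factorial (d+1) : ℝ) := by
    have : |g 1| = 1 := by rw [hg1]; exact hx1
    rw [hTay] at this
    rw [← this]
    rw [abs_div, abs_mul]
    simp [abs_of_pos hfact]
  have h2 : (Nat.factorial (d+1) : ℝ) ≤ 2 ^ (d+1) * A := by
    have := h1
    rw [eq_div_iff (ne_of_gt hfact), one_mul] at this
    rw [this]
    exact hmb
  rw [div_le_iff₀ (by positivity : (0:ℝ) < 2 ^ (d+1))]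
  linarith
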